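/- Let $a, b \in \mathbb{R}$ with $a + b > 0$, and let $r \geq 1$. Suppose $g : (\mathbb{R}_{>0})^r \to \mathbb{C}$ satisfies $|g(x_1, \ldots, x_r)| \leq \prod_{i=1}^r \min(x_i^{a}, x_i^{-b})$. Let $\Lambda \subset \{(y_1,\ldots,y_r) \in (\mathbb{R}_{>0})^r : y_1 \cdots y_r = 1\}$ be a discrete cocompact subgroup of the multiplicative group $\{y : \prod y_i = 1\}$. Then for all $x \in (\mathbb{R}_{>0})^r$, $$\sum_{u \in \Lambda} |g(u_1 x_1, \ldots, u_r x_r)| \ll_{a, b, \Lambda} \big(1 + |\log(x_1 \cdots x_r)|^{r-1}\big) \min\big((x_1 \cdots x_r)^{a},\ (x_1 \cdots x_r)^{-b}\big).$$ -/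

import Mathlib

set_option maxHeartbeats 1000000
set_option synthInstance.maxHeartbeats 400000

open Real Finset Submodule Module

section BMhelpers

lemma BM_min_rpow (a b : ℝ) (hab : 0 < a + b) (y : ℝ) (hy : 0 < y) :
    min (y ^ a) (y ^ (-b)) =
      Real.exp ((a - b) / 2 * Real.log y - (a + b) / 2 * |Real.log y|) := by
  rw [Real.rpow_def_of_pos hy, Real.rpow_def_of_pos hy,
    ← Real.exp_monotone.map_min]
  congr 1
  rcases abs_cases (Real.log y) with ⟨h1, h2⟩ | ⟨h1, h2⟩
  · rw [min_eq_right (by nlinarith)]; rw [h1]; ring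
  · rw [min_eq_left (by nlinarith)]; rw [h1]; ring

lemma BM_pow (z : ℝ) (hz : 0 ≤ z) (n : ℕ) : (1 + z) ^ n ≤ 2 ^ n * (1 + z ^ n) := by
  rcases le_total z 1 with h | h
  · calc (1 + z) ^ n ≤ 2 ^ n := by
          apply pow_le_pow_left₀ (by linarith) (by linarith)
      _ ≤ 2 ^ n * (1 + z ^ n) := by
          apply le_mul_of_one_le_right (by positivity)
          have := pow_nonneg hz n
          linarith
  · calc (1 + z) ^ n ≤ (2 * z) ^ n := by
          apply pow_le_pow_left₀ (by linarith) (by linarith)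
      _ = 2 ^ n * z ^ n := mul_pow _ _ _
      _ ≤ 2 ^ n * (1 + z ^ n) := by
          apply mul_le_mul_of_nonneg_left _ (by positivity)
          linarith [pow_nonneg hz n]

lemma BM_oneD (lam : ℝ) (hlam : 0 < lam) :
    ∃ σ : ℝ, 0 ≤ σ ∧ ∀ t : Finset ℤ, ∑ n ∈ t, Real.exp (-(lam * |(n : ℝ)|)) ≤ σ := by
  have hgeo : Summable (fun n : ℕ => Real.exp (-lam) ^ n) :=
    summable_geometric_of_lt_one (Real.exp_nonneg _) (Real.exp_lt_one_iff.mpr (by linarith))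
  have hsum : Summable (fun n : ℤ => Real.exp (-(lam * |(n : ℝ)|))) := by
    apply Summable.of_nat_of_neg
    · refine hgeo.congr fun n => ?_
      rw [← Real.exp_nat_mul]
      congr 1
      rw [Int.cast_natCast, abs_of_nonneg (Nat.cast_nonneg n)]
      ring
    · refine hgeo.congr fun n => ?_
      rw [← Real.exp_nat_mul]
      congr 1
      push_cast
      rw [abs_neg, abs_of_nonneg (Nat.cast_nonneg n)]
      ring
  exact ⟨∑' n : ℤ, Real.exp (-(lam * |(n : ℝ)|)), tsum_nonneg (fun _ => (Real.exp_pos _).le),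
    fun t => Summable.sum_le_tsum t (fun _ _ => (Real.exp_pos _).le) hsum⟩

lemma BM_prod_bound {k : ℕ} (q : ℤ → ℝ) (hq : ∀ n, 0 ≤ q n) (σ : ℝ)
    (h : ∀ t : Finset ℤ, ∑ n ∈ t, q n ≤ σ) (F : Finset (Fin k → ℤ)) :
    ∑ m ∈ F, ∏ i, q (m i) ≤ σ ^ k := by
  have hsub : F ⊆ Fintype.piFinset (fun i => F.image (fun m => m i)) := by
    intro m hm
    rw [Fintype.mem_piFinset]
    exact fun i => mem_image_of_mem _ hm
  calc ∑ m ∈ F, ∏ i, q (m i)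
      ≤ ∑ m ∈ Fintype.piFinset (fun i => F.image (fun m => m i)), ∏ i, q (m i) :=
        sum_le_sum_of_subset_of_nonneg hsub (fun _ _ _ => prod_nonneg fun _ _ => hq _)
    _ = ∏ i, ∑ n ∈ F.image (fun m => m i), q n := (prod_univ_sum _ _).symm
    _ ≤ ∏ _i : Fin k, σ := prod_le_prod (fun _ _ => sum_nonneg fun _ _ => hq _) (fun i _ => h _)
    _ = σ ^ k := by simp

lemma BM_core (c κ R T : ℝ) (hc : 0 < c) (hκ : 0 < κ) (hR : 0 ≤ R) (r k : ℕ)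
    (σ : ℝ) (hσ1 : ∀ t : Finset ℤ, ∑ n ∈ t, Real.exp (-(c * κ / 2 * |(n : ℝ)|)) ≤ σ)
    (F : Finset (Fin k → ℤ)) :
    ∑ m ∈ F, Real.exp (-(c * max |T| (κ * (∑ i, |((m i : ℤ) : ℝ)|) - r * R - |T|))) ≤
      ((4 * (r * R) / κ + 3 + 8 / κ) ^ k * (1 + |T|) ^ k + σ ^ k) * Real.exp (-(c * |T|)) := by
  classical
  set S : (Fin k → ℤ) → ℝ := fun m => ∑ i, |((m i : ℤ) : ℝ)| with hS
  have hS0 : ∀ m, 0 ≤ S m := fun m => sum_nonneg fun _ _ => abs_nonneg _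
  set ρ : ℝ := (2 * (r * R) + 4 * |T|) / κ with hρ
  have hρ0 : 0 ≤ ρ := by positivity
  set P : (Fin k → ℤ) → Prop := fun m => κ * S m ≤ 2 * (r * R) + 4 * |T| with hP
  have hsplit := Finset.sum_filter_add_sum_filter_not F P
    (fun m => Real.exp (-(c * max |T| (κ * S m - r * R - |T|))))
  rw [← hsplit]
  set M : ℤ := ⌈ρ⌉ with hM
  have hM0 : 0 ≤ M := Int.ceil_nonneg hρ0
  have hMρ : (M : ℝ) ≤ ρ + 1 := le_of_lt (Int.ceil_lt_add_one ρ)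
  have hbox : F.filter P ⊆ Fintype.piFinset (fun _ => Finset.Icc (-M) M) := by
    intro m hm
    rw [Finset.mem_filter] at hm
    rw [Fintype.mem_piFinset]
    intro i
    have hmi : |((m i : ℤ) : ℝ)| ≤ ρ := by
      have h1 : |((m i : ℤ) : ℝ)| ≤ S m :=
        Finset.single_le_sum (f := fun j => |((m j : ℤ) : ℝ)|)
          (fun _ _ => abs_nonneg _) (mem_univ i)
      have h2 : κ * S m ≤ 2 * (r * R) + 4 * |T| := hm.2
      rw [hρ, le_div_iff₀ hκ]
      nlinarith [hS0 m]
    rw [Finset.mem_Icc]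
    constructor
    · have : -(M : ℝ) ≤ (m i : ℝ) := by
        have := abs_le.mp hmi
        have hh : ρ ≤ (M : ℝ) := Int.le_ceil ρ
        linarith [this.1]
      exact_mod_cast this
    · have : ((m i : ℤ) : ℝ) ≤ (M : ℝ) := le_trans (le_trans (le_abs_self _) hmi) (Int.le_ceil ρ)
      exact_mod_cast this
  have hcard : ((F.filter P).card : ℝ) ≤ (4 * (r * R) / κ + 3 + 8 / κ) ^ k * (1 + |T|) ^ k := by
    have h1 : (F.filter P).card ≤ (Fintype.piFinset (fun _ : Fin k => Finset.Icc (-M) M)).card :=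
      Finset.card_le_card hbox
    have h2 : (Fintype.piFinset (fun _ : Fin k => Finset.Icc (-M) M)).card
        = ((M - -M + 1).toNat) ^ k := by
      rw [Fintype.card_piFinset]
      simp only [Int.card_Icc, Finset.prod_const, card_univ, Fintype.card_fin]
      congr 1
      omega
    have h3 : (((M - -M + 1).toNat : ℤ) : ℝ) = 2 * (M : ℝ) + 1 := by
      rw [Int.toNat_of_nonneg (by omega)]
      push_cast; ring
    have h4 : (((M - -M + 1).toNat : ℕ) : ℝ) ≤ (4 * (r * R) / κ + 3 + 8 / κ) * (1 + |T|) := by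
      have hA : 0 ≤ 4 * ((r : ℝ) * R) / κ := by positivity
      have hB : (0:ℝ) ≤ 8 / κ := by positivity
      have : (((M - -M + 1).toNat : ℕ) : ℝ) = 2 * (M : ℝ) + 1 := by exact_mod_cast h3
      rw [this]
      have : 2 * (M : ℝ) + 1 ≤ 2 * ρ + 3 := by linarith
      refine le_trans this ?_
      have h2ρ : 2 * ρ = 4 * ((r:ℝ) * R) / κ + 8 * |T| / κ := by
        rw [hρ]; field_simp; ring
      have habs : 0 ≤ |T| := abs_nonneg T
      have hBT : 0 ≤ 8 * |T| / κ := by positivity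
      have hAT : 0 ≤ 4 * ((r:ℝ) * R) / κ * |T| := by positivity
      have hexp : (4 * ((r:ℝ) * R) / κ + 3 + 8 / κ) * (1 + |T|)
          = (4 * ((r:ℝ) * R) / κ + 8 * |T| / κ + 3)
            + (8 / κ + (4 * ((r:ℝ) * R) / κ) * |T| + 3 * |T|) := by
        field_simp
        ring
      linarith [hB, hAT, habs]
    calc ((F.filter P).card : ℝ) ≤ (((M - -M + 1).toNat ^ k : ℕ) : ℝ) := by
          exact_mod_cast h2 ▸ h1
      _ = (((M - -M + 1).toNat : ℕ) : ℝ) ^ k := by push_cast; ring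
      _ ≤ ((4 * (r * R) / κ + 3 + 8 / κ) * (1 + |T|)) ^ k := by
          apply pow_le_pow_left₀ (Nat.cast_nonneg _) h4
      _ = (4 * (r * R) / κ + 3 + 8 / κ) ^ k * (1 + |T|) ^ k := mul_pow _ _ _
  have hpart1 : ∑ m ∈ F.filter P, Real.exp (-(c * max |T| (κ * S m - r * R - |T|))) ≤
      (4 * (r * R) / κ + 3 + 8 / κ) ^ k * (1 + |T|) ^ k * Real.exp (-(c * |T|)) := by
    calc ∑ m ∈ F.filter P, Real.exp (-(c * max |T| (κ * S m - r * R - |T|)))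
        ≤ ∑ _m ∈ F.filter P, Real.exp (-(c * |T|)) := by
          apply Finset.sum_le_sum
          intro m _
          apply Real.exp_le_exp.mpr
          have := le_max_left |T| (κ * S m - r * R - |T|)
          nlinarith
      _ = ((F.filter P).card : ℝ) * Real.exp (-(c * |T|)) := by
          rw [Finset.sum_const, nsmul_eq_mul]
      _ ≤ _ := by
          apply mul_le_mul_of_nonneg_right hcard (Real.exp_pos _).le
  have hpart2 : ∑ m ∈ F.filter (fun m => ¬ P m),
      Real.exp (-(c * max |T| (κ * S m - r * R - |T|))) ≤
      σ ^ k * Real.exp (-(c * |T|)) := by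
    have hterm : ∀ m ∈ F.filter (fun m => ¬ P m),
        Real.exp (-(c * max |T| (κ * S m - r * R - |T|))) ≤
        Real.exp (-(c * |T|)) * ∏ i, Real.exp (-(c * κ / 2 * |((m i : ℤ) : ℝ)|)) := by
      intro m hm
      rw [Finset.mem_filter] at hm
      have hgt : 2 * (r * R) + 4 * |T| < κ * S m := lt_of_not_ge hm.2
      have hmax : |T| + c⁻¹ * 0 + κ / 2 * S m ≤ max |T| (κ * S m - r * R - |T|) := by
        refine le_trans ?_ (le_max_right _ _)
        simp only [mul_zero]
        nlinarith
      have hprod : ∏ i, Real.exp (-(c * κ / 2 * |((m i : ℤ) : ℝ)|)) =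
          Real.exp (-(c * (κ / 2 * S m))) := by
        rw [← Real.exp_sum]
        congr 1
        rw [show κ / 2 * S m = ∑ i, κ / 2 * |((m i : ℤ) : ℝ)| from Finset.mul_sum _ _ _,
          Finset.mul_sum, ← Finset.sum_neg_distrib]
        apply Finset.sum_congr rfl
        intro i _
        ring
      rw [hprod, ← Real.exp_add]
      apply Real.exp_le_exp.mpr
      have h5 : |T| + κ / 2 * S m ≤ max |T| (κ * S m - r * R - |T|) := by
        simpa using hmax
      nlinarith [h5]
    calc ∑ m ∈ F.filter (fun m => ¬ P m), Real.exp (-(c * max |T| (κ * S m - r * R - |T|)))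
        ≤ ∑ m ∈ F.filter (fun m => ¬ P m),
            Real.exp (-(c * |T|)) * ∏ i, Real.exp (-(c * κ / 2 * |((m i : ℤ) : ℝ)|)) :=
          Finset.sum_le_sum hterm
      _ = Real.exp (-(c * |T|)) * ∑ m ∈ F.filter (fun m => ¬ P m),
            ∏ i, Real.exp (-(c * κ / 2 * |((m i : ℤ) : ℝ)|)) := by
          rw [Finset.mul_sum]
      _ ≤ Real.exp (-(c * |T|)) * σ ^ k := by
          apply mul_le_mul_of_nonneg_left _ (Real.exp_pos _).le
          exact BM_prod_bound _ (fun n => (Real.exp_pos _).le) σ hσ1 _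
      _ = σ ^ k * Real.exp (-(c * |T|)) := mul_comm _ _
  calc (∑ m ∈ F.filter P, Real.exp (-(c * max |T| (κ * S m - r * R - |T|)))) +
        ∑ m ∈ F.filter (fun m => ¬ P m), Real.exp (-(c * max |T| (κ * S m - r * R - |T|)))
      ≤ (4 * (r * R) / κ + 3 + 8 / κ) ^ k * (1 + |T|) ^ k * Real.exp (-(c * |T|)) +
        σ ^ k * Real.exp (-(c * |T|)) := add_le_add hpart1 hpart2
    _ = _ := by ring

lemma BM_lattice (r : ℕ) (hr : 1 ≤ r) (L : AddSubgroup (Fin r → ℝ))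
    (hL : ∀ v ∈ L, ∑ i, v i = 0) (hdisc : DiscreteTopology L) :
    ∃ (k : ℕ) (ψ : L → (Fin k → ℤ)) (κ : ℝ), k ≤ r - 1 ∧ 0 < κ ∧ Function.Injective ψ ∧
      ∀ u : L, κ * ∑ i, |((ψ u i : ℤ) : ℝ)| ≤ ∑ j, |(u : Fin r → ℝ) j| := by
  classical
  set V : Submodule ℝ (Fin r → ℝ) := Submodule.span ℝ (L : Set (Fin r → ℝ)) with hV
  set f : V →ₗ[ℤ] (Fin r → ℝ) := V.subtype.restrictScalars ℤ with hf
  set Λ : Submodule ℤ V := (AddSubgroup.toIntSubmodule L).comap f with hΛ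
  have hmemV : ∀ x ∈ L, x ∈ V := fun x hx => Submodule.subset_span hx
  have h_img : f '' Λ = (L : Set (Fin r → ℝ)) := by
    rw [← Submodule.map_coe f, Submodule.map_comap_eq_self]
    · rfl
    · exact fun x hx => LinearMap.mem_range.mpr ⟨⟨x, hmemV x hx⟩, rfl⟩
  haveI : DiscreteTopology (L : Set (Fin r → ℝ)) := hdisc
  haveI hdΛ : DiscreteTopology Λ := by
    refine DiscreteTopology.preimage_of_continuous_injective (L : Set (Fin r → ℝ)) ?_
      (Submodule.injective_subtype V)
    exact LinearMap.continuous_of_finiteDimensional V.subtype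
  haveI : IsZLattice ℝ Λ := ⟨by
    rw [← (Submodule.map_injective_of_injective (Submodule.injective_subtype V)).eq_iff,
      Submodule.map_span, Submodule.map_top, Submodule.range_subtype]
    exact congrArg (Submodule.span ℝ) h_img ▸ rfl⟩
  haveI : Module.Finite ℤ Λ := inferInstance
  haveI : Module.Free ℤ Λ := inferInstance
  set k : ℕ := Fintype.card (Module.Free.ChooseBasisIndex ℤ Λ) with hk
  let b : Basis (Fin k) ℤ Λ :=
    (Module.Free.chooseBasis ℤ Λ).reindex (Fintype.equivFin _)
  have hkr : k ≤ r - 1 := by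
    have hrank : finrank ℤ Λ = finrank ℝ V := ZLattice.rank ℝ Λ
    have hkk : k = finrank ℤ Λ := (Module.finrank_eq_card_chooseBasisIndex ℤ Λ).symm
    have hVne : V ≠ ⊤ := by
      intro htop
      have h1 : (fun _ : Fin r => (1 : ℝ)) ∈ V := htop ▸ Submodule.mem_top
      set S : (Fin r → ℝ) →ₗ[ℝ] ℝ := ∑ i : Fin r, LinearMap.proj i with hS
      have hle : V ≤ LinearMap.ker S := by
        rw [hV, Submodule.span_le]
        intro x hx
        simp only [SetLike.mem_coe, LinearMap.mem_ker, hS, LinearMap.sum_apply,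
          LinearMap.proj_apply]
        exact hL x hx
      have h2 := hle h1
      simp only [LinearMap.mem_ker, hS, LinearMap.sum_apply, LinearMap.proj_apply,
        Finset.sum_const, card_univ, Fintype.card_fin, nsmul_eq_mul, mul_one] at h2
      have h3 : (r : ℝ) ≠ 0 := Nat.cast_ne_zero.mpr (by omega)
      exact h3 h2
    have hlt : finrank ℝ V < finrank ℝ (Fin r → ℝ) :=
      Submodule.finrank_lt (hVne)
    rw [Module.finrank_pi, Fintype.card_fin] at hlt
    omega
  have htoΛ : ∀ u : L, (⟨(u : Fin r → ℝ), hmemV _ u.2⟩ : V) ∈ Λ := by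
    intro u
    simp only [hΛ, Submodule.mem_comap]
    exact u.2
  set toΛ : L → Λ := fun u => ⟨⟨(u : Fin r → ℝ), hmemV _ u.2⟩, htoΛ u⟩ with htoΛdef
  have htoΛinj : Function.Injective toΛ := by
    intro u u' h
    have h2 := congrArg (fun z : Λ => ((z : V) : Fin r → ℝ)) h
    exact Subtype.ext h2
  set ψ : L → (Fin k → ℤ) := fun u i => b.repr (toΛ u) i with hψ
  have hψinj : Function.Injective ψ := by
    intro u u' h
    apply htoΛinj
    apply b.repr.injective
    exact DFunLike.coe_injective h
  set B : Basis (Fin k) ℝ V := b.ofZLatticeBasis ℝ Λ with hB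
  haveI : FiniteDimensional ℝ V := inferInstance
  set φ : V →L[ℝ] (Fin k → ℝ) := LinearMap.toContinuousLinearMap B.equivFun.toLinearMap with hφ
  set Cop : ℝ := ‖φ‖ with hCop
  have hCop0 : 0 ≤ Cop := by rw [hCop]; exact norm_nonneg φ
  refine ⟨k, ψ, ((k : ℝ) * Cop + 1)⁻¹, hkr, by positivity, hψinj, ?_⟩
  intro u
  set W : ℝ := ∑ j, |(u : Fin r → ℝ) j| with hW
  have hW0 : 0 ≤ W := Finset.sum_nonneg fun _ _ => abs_nonneg _
  have hnormle : ‖((toΛ u : V) : Fin r → ℝ)‖ ≤ W := by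
    rw [pi_norm_le_iff_of_nonneg hW0]
    intro i
    rw [Real.norm_eq_abs]
    exact Finset.single_le_sum (f := fun j => |(u : Fin r → ℝ) j|)
      (fun _ _ => abs_nonneg _) (Finset.mem_univ i)
  have hcoord : ∀ i, |((ψ u i : ℤ) : ℝ)| ≤ Cop * W := by
    intro i
    have h1 : ((ψ u i : ℤ) : ℝ) = B.repr (toΛ u : V) i := by
      rw [hψ, hB]
      exact (b.ofZLatticeBasis_repr_apply ℝ Λ (toΛ u) i).symm
    have h2 : φ ((toΛ u : Λ) : V) = B.equivFun ((toΛ u : Λ) : V) := by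
      rw [hφ]
      exact congrFun (LinearMap.coe_toContinuousLinearMap' _) _
    have h3 : B.repr (toΛ u : V) i = φ ((toΛ u : Λ) : V) i := by
      rw [h2, Basis.equivFun_apply]
    rw [h1, h3]
    calc |φ ((toΛ u : Λ) : V) i| ≤ ‖φ ((toΛ u : Λ) : V)‖ :=
          norm_le_pi_norm (φ ((toΛ u : Λ) : V)) i
      _ ≤ Cop * ‖((toΛ u : Λ) : V)‖ := φ.le_opNorm _
      _ ≤ Cop * W := by
          apply mul_le_mul_of_nonneg_left _ hCop0
          rw [show ‖((toΛ u : Λ) : V)‖ = ‖(((toΛ u : Λ) : V) : Fin r → ℝ)‖ from rfl]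
          exact hnormle
  have hsum : ∑ i, |((ψ u i : ℤ) : ℝ)| ≤ (k : ℝ) * (Cop * W) := by
    calc ∑ i, |((ψ u i : ℤ) : ℝ)| ≤ ∑ _i : Fin k, Cop * W :=
          Finset.sum_le_sum fun i _ => hcoord i
      _ = (k : ℝ) * (Cop * W) := by
          rw [Finset.sum_const, Finset.card_univ, Fintype.card_fin, nsmul_eq_mul]
  have hpos : (0 : ℝ) < (k : ℝ) * Cop + 1 := by positivity
  rw [inv_mul_le_iff₀ hpos]
  calc ∑ i, |((ψ u i : ℤ) : ℝ)| ≤ (k : ℝ) * (Cop * W) := hsum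
    _ ≤ ((k : ℝ) * Cop + 1) * W := by nlinarith

end BMhelpers

/-- A version of the Bruggeman–Miatello lemma: summing local bounds
`∏ min(xᵢᵃ, xᵢ⁻ᵇ)` over a discrete cocompact subgroup of the norm-one
hypersurface (written additively via `exp` on an additive subgroup `L` of the
hyperplane `∑ vᵢ = 0`) loses only a power of the logarithm of the total norm. -/
theorem stmt7 (a b : ℝ) (hab : 0 < a + b) (r : ℕ) (hr : 1 ≤ r)
    (L : AddSubgroup (Fin r → ℝ))
    (hL : ∀ v ∈ L, ∑ i, v i = 0)
    (hdisc : DiscreteTopology L)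
    (hcocompact : ∃ Kc : Set (Fin r → ℝ), IsCompact Kc ∧
      ∀ v : Fin r → ℝ, (∑ i, v i = 0) → ∃ u ∈ L, v - u ∈ Kc) :
    ∃ C : ℝ, ∀ g : (Fin r → ℝ) → ℂ,
      (∀ x : Fin r → ℝ, (∀ i, 0 < x i) →
        ‖g x‖ ≤ ∏ i, min ((x i) ^ a) ((x i) ^ (-b))) →
      ∀ x : Fin r → ℝ, (∀ i, 0 < x i) →
        ∑' u : L, ‖g (fun i => Real.exp ((u : Fin r → ℝ) i) * x i)‖ ≤
          C * (1 + |Real.log (∏ i, x i)| ^ (r - 1)) *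
            min ((∏ i, x i) ^ a) ((∏ i, x i) ^ (-b)) := by
  classical
  obtain ⟨Kc, hKcomp, hKcov⟩ := hcocompact
  -- bound for the compact set
  obtain ⟨R₀, hR₀⟩ := hKcomp.isBounded.subset_closedBall 0
  set R : ℝ := max R₀ 0 with hRdef
  have hR0 : 0 ≤ R := le_max_right _ _
  have hKR : ∀ y ∈ Kc, ‖y‖ ≤ R := by
    intro y hy
    have := hR₀ hy
    rw [Metric.mem_closedBall, dist_zero_right] at this
    exact le_trans this (le_max_left _ _)
  obtain ⟨k, ψ, κ, hk, hκ, hψinj, hκle⟩ := BM_lattice r hr L hL hdisc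
  set c : ℝ := (a + b) / 2 with hcdef
  have hc : 0 < c := by rw [hcdef]; linarith
  obtain ⟨σ, hσ0, hσ1⟩ := BM_oneD (c * κ / 2) (by positivity)
  set Cbox : ℝ := 4 * (r * R) / κ + 3 + 8 / κ with hCbox
  have hCbox0 : 0 ≤ Cbox := by rw [hCbox]; positivity
  set C : ℝ := Cbox ^ k * 2 ^ (r - 1) + σ ^ k with hCdef
  have hC0 : 0 ≤ C := by rw [hCdef]; positivity
  refine ⟨C, ?_⟩
  intro g hg x hx
  set t : Fin r → ℝ := fun i => Real.log (x i) with ht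
  set T : ℝ := Real.log (∏ i, x i) with hT
  have hprodpos : 0 < ∏ i, x i := Finset.prod_pos fun i _ => hx i
  have hTsum : T = ∑ i, t i := by
    rw [hT, ht]
    exact Real.log_prod (fun i _ => (hx i).ne')
  have hrR : (0:ℝ) < r := by exact_mod_cast hr
  -- the element u₀ from cocompactness
  set t0 : Fin r → ℝ := fun i => t i - T / r with ht0
  have ht0sum : ∑ i, t0 i = 0 := by
    rw [ht0]
    rw [Finset.sum_sub_distrib, Finset.sum_const, card_univ, Fintype.card_fin,
      nsmul_eq_mul, ← hTsum]
    field_simp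
    ring
  obtain ⟨u₀, hu₀L, hu₀K⟩ := hKcov t0 ht0sum
  have hs₀ : ∀ i, |t0 i - u₀ i| ≤ R := by
    intro i
    have h1 : ‖t0 - u₀‖ ≤ R := hKR _ hu₀K
    have h2 : ‖(t0 - u₀) i‖ ≤ ‖t0 - u₀‖ := norm_le_pi_norm _ i
    rw [Pi.sub_apply, Real.norm_eq_abs] at h2
    exact le_trans h2 h1
  set u₀L : L := ⟨u₀, hu₀L⟩ with hu₀Ldef
  set ψ' : L → (Fin k → ℤ) := fun u => ψ (u + u₀L) with hψ'
  have hψ'inj : Function.Injective ψ' := by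
    intro u u' h
    have := hψinj h
    exact add_left_injective u₀L this
  -- rewrite the right-hand side
  rw [BM_min_rpow a b hab _ hprodpos, ← hT]
  -- per-term bounds
  have hterm : ∀ u : L, ‖g (fun i => Real.exp ((u : Fin r → ℝ) i) * x i)‖ ≤
      Real.exp ((a - b) / 2 * T) *
        Real.exp (-(c * ∑ i, |(u : Fin r → ℝ) i + t i|)) := by
    intro u
    have hy : ∀ i, 0 < Real.exp ((u : Fin r → ℝ) i) * x i :=
      fun i => mul_pos (Real.exp_pos _) (hx i)
    have hlog : ∀ i, Real.log (Real.exp ((u : Fin r → ℝ) i) * x i)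
        = (u : Fin r → ℝ) i + t i := by
      intro i
      rw [Real.log_mul (Real.exp_ne_zero _) (hx i).ne', Real.log_exp, ht]
    calc ‖g (fun i => Real.exp ((u : Fin r → ℝ) i) * x i)‖
        ≤ ∏ i, min ((Real.exp ((u : Fin r → ℝ) i) * x i) ^ a)
            ((Real.exp ((u : Fin r → ℝ) i) * x i) ^ (-b)) := hg _ hy
      _ = ∏ i, Real.exp ((a - b) / 2 * ((u : Fin r → ℝ) i + t i)
            - c * |(u : Fin r → ℝ) i + t i|) := by
          apply Finset.prod_congr rfl
          intro i _
          rw [BM_min_rpow a b hab _ (hy i), hlog i, hcdef]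
      _ = Real.exp (∑ i, ((a - b) / 2 * ((u : Fin r → ℝ) i + t i)
            - c * |(u : Fin r → ℝ) i + t i|)) := (Real.exp_sum _ _).symm
      _ = Real.exp ((a - b) / 2 * T) *
            Real.exp (-(c * ∑ i, |(u : Fin r → ℝ) i + t i|)) := by
          rw [← Real.exp_add]
          congr 1
          rw [Finset.sum_sub_distrib, ← Finset.mul_sum, ← Finset.mul_sum,
            Finset.sum_add_distrib, hL _ u.2, zero_add, ← hTsum]
          ring
  -- lower bound on the exponent
  have hlow : ∀ u : L, max |T| (κ * (∑ i, |((ψ' u i : ℤ) : ℝ)|) - r * R - |T|)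
      ≤ ∑ i, |(u : Fin r → ℝ) i + t i| := by
    intro u
    apply max_le
    · have h1 : |∑ i, ((u : Fin r → ℝ) i + t i)| ≤ ∑ i, |(u : Fin r → ℝ) i + t i| :=
        Finset.abs_sum_le_sum_abs _ _
      rw [Finset.sum_add_distrib, hL _ u.2, zero_add, ← hTsum] at h1
      exact h1
    · have hw := hκle (u + u₀L)
      have hpoint : ∀ i, |((u + u₀L : L) : Fin r → ℝ) i|
          ≤ |(u : Fin r → ℝ) i + t i| + |t0 i - u₀ i| + |T| / r := by
        intro i
        have hrw : ((u + u₀L : L) : Fin r → ℝ) i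
            = ((u : Fin r → ℝ) i + t i) - (t0 i - u₀ i) - T / r := by
          push_cast
          rw [Pi.add_apply, ht0]
          ring
        rw [hrw]
        calc |((u : Fin r → ℝ) i + t i) - (t0 i - u₀ i) - T / r|
            ≤ |((u : Fin r → ℝ) i + t i) - (t0 i - u₀ i)| + |T / r| := abs_sub _ _
          _ ≤ |(u : Fin r → ℝ) i + t i| + |t0 i - u₀ i| + |T / r| := by
              have := abs_sub ((u : Fin r → ℝ) i + t i) (t0 i - u₀ i)
              linarith
          _ = |(u : Fin r → ℝ) i + t i| + |t0 i - u₀ i| + |T| / r := by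
              rw [abs_div, abs_of_pos hrR]
      have hsum2 : ∑ j, |((u + u₀L : L) : Fin r → ℝ) j|
          ≤ (∑ i, |(u : Fin r → ℝ) i + t i|) + r * R + |T| := by
        calc ∑ j, |((u + u₀L : L) : Fin r → ℝ) j|
            ≤ ∑ i, (|(u : Fin r → ℝ) i + t i| + |t0 i - u₀ i| + |T| / r) :=
              Finset.sum_le_sum fun i _ => hpoint i
          _ = (∑ i, |(u : Fin r → ℝ) i + t i|) + (∑ i, |t0 i - u₀ i|)
              + (r : ℝ) * (|T| / r) := by
              rw [Finset.sum_add_distrib, Finset.sum_add_distrib, Finset.sum_const,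
                card_univ, Fintype.card_fin, nsmul_eq_mul]
          _ ≤ (∑ i, |(u : Fin r → ℝ) i + t i|) + (r : ℝ) * R + (r : ℝ) * (|T| / r) := by
              have : ∑ i, |t0 i - u₀ i| ≤ ∑ _i : Fin r, R :=
                Finset.sum_le_sum fun i _ => hs₀ i
              rw [Finset.sum_const, card_univ, Fintype.card_fin, nsmul_eq_mul] at this
              linarith
          _ = (∑ i, |(u : Fin r → ℝ) i + t i|) + r * R + |T| := by
              field_simp
      have := le_trans hw hsum2
      rw [hψ'] at *
      linarith
  -- finite sum bound
  have hfin : ∀ s : Finset L, (∑ u ∈ s, ‖g (fun i => Real.exp ((u : Fin r → ℝ) i) * x i)‖)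
      ≤ C * (1 + |T| ^ (r - 1)) * Real.exp ((a - b) / 2 * T - (a + b) / 2 * |T|) := by
    intro s
    have hstep1 : (∑ u ∈ s, ‖g (fun i => Real.exp ((u : Fin r → ℝ) i) * x i)‖)
        ≤ Real.exp ((a - b) / 2 * T) *
          ∑ u ∈ s, Real.exp (-(c * max |T|
            (κ * (∑ i, |((ψ' u i : ℤ) : ℝ)|) - r * R - |T|))) := by
      rw [Finset.mul_sum]
      apply Finset.sum_le_sum
      intro u _
      refine le_trans (hterm u) ?_
      apply mul_le_mul_of_nonneg_left _ (Real.exp_pos _).le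
      apply Real.exp_le_exp.mpr
      have := hlow u
      nlinarith [hc]
    have hstep2 : (∑ u ∈ s, Real.exp (-(c * max |T|
          (κ * (∑ i, |((ψ' u i : ℤ) : ℝ)|) - r * R - |T|))))
        = ∑ m ∈ s.image ψ', Real.exp (-(c * max |T|
          (κ * (∑ i, |((m i : ℤ) : ℝ)|) - r * R - |T|))) := by
      rw [Finset.sum_image (fun u _ u' _ h => hψ'inj h)]
    have hstep3 := BM_core c κ R T hc hκ hR0 r k σ hσ1 (s.image ψ')
    have hstep4 : (Cbox ^ k * (1 + |T|) ^ k + σ ^ k) ≤ C * (1 + |T| ^ (r - 1)) := by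
      have h1 : (1 + |T|) ^ k ≤ (1 + |T|) ^ (r - 1) := by
        apply pow_le_pow_right₀ (by linarith [abs_nonneg T]) hk
      have h2 : (1 + |T|) ^ (r - 1) ≤ 2 ^ (r - 1) * (1 + |T| ^ (r - 1)) :=
        BM_pow |T| (abs_nonneg T) (r - 1)
      have h3 : Cbox ^ k * (1 + |T|) ^ k ≤ Cbox ^ k * (2 ^ (r - 1) * (1 + |T| ^ (r - 1))) := by
        apply mul_le_mul_of_nonneg_left _ (by positivity)
        exact le_trans h1 h2
      have h4 : σ ^ k ≤ σ ^ k * (1 + |T| ^ (r - 1)) := by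
        apply le_mul_of_one_le_right (by positivity)
        have : 0 ≤ |T| ^ (r - 1) := by positivity
        linarith
      rw [hCdef]
      have h5 : 0 ≤ |T| ^ (r - 1) := by positivity
      nlinarith [h3, h4]
    calc (∑ u ∈ s, ‖g (fun i => Real.exp ((u : Fin r → ℝ) i) * x i)‖)
        ≤ Real.exp ((a - b) / 2 * T) *
          ∑ u ∈ s, Real.exp (-(c * max |T|
            (κ * (∑ i, |((ψ' u i : ℤ) : ℝ)|) - r * R - |T|))) := hstep1
      _ = Real.exp ((a - b) / 2 * T) *
          ∑ m ∈ s.image ψ', Real.exp (-(c * max |T|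
            (κ * (∑ i, |((m i : ℤ) : ℝ)|) - r * R - |T|))) := by rw [hstep2]
      _ ≤ Real.exp ((a - b) / 2 * T) *
          ((Cbox ^ k * (1 + |T|) ^ k + σ ^ k) * Real.exp (-(c * |T|))) := by
          apply mul_le_mul_of_nonneg_left _ (Real.exp_pos _).le
          exact hstep3
      _ ≤ Real.exp ((a - b) / 2 * T) *
          ((C * (1 + |T| ^ (r - 1))) * Real.exp (-(c * |T|))) := by
          apply mul_le_mul_of_nonneg_left _ (Real.exp_pos _).le
          apply mul_le_mul_of_nonneg_right hstep4 (Real.exp_pos _).le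
      _ = C * (1 + |T| ^ (r - 1)) * Real.exp ((a - b) / 2 * T - (a + b) / 2 * |T|) := by
          rw [show (a - b) / 2 * T - (a + b) / 2 * |T| = (a - b) / 2 * T + (-(c * |T|)) by
            rw [hcdef]; ring, Real.exp_add]
          ring
  by_cases hsumm : Summable (fun u : L => ‖g (fun i => Real.exp ((u : Fin r → ℝ) i) * x i)‖)
  · exact hsumm.tsum_le_of_sum_le hfin
  · rw [tsum_eq_zero_of_not_summable hsumm]
    have h1 : 0 ≤ 1 + |T| ^ (r - 1) := by positivity
    have h2 : 0 ≤ Real.exp ((a - b) / 2 * T - (a + b) / 2 * |T|) := (Real.exp_pos _).le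
    positivity
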